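/- arXiv:math/0405145 — 2 statements merged into one kernel-verified Lean document; each statement's English description precedes it below -/
import Mathlib

section
/- Let H be a finite-dimensional biperfect weak Hopf algebra over a field k with invertible weak antipode T, let {e_i}_{i∈I} be a basis of H with dual basis {e^i}_{i∈I} in H*, and let R = Σ_{i∈I} (ε ∞ e_i) ⊗ (e^i ∞ 1) ∈ D(H) ⊗ D(H). Then (Δ ⊗ id)(R) = R_{13}R_{23} and (id ⊗ Δ)(R) = R_{13}R_{12} in D(H)^{⊗3}, where Δ is the coproduct of D(H) and R_{12} = R ⊗ 1, R_{23} = 1 ⊗ R, R_{13} = (τ ⊗ id)(1 ⊗ R) with τ the flip of the first two tensor factors. -/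
noncomputable section

open TensorProduct

/-- The data of a (weak) bialgebra on a `k`-vector space `H`:
multiplication, unit, comultiplication and counit, all as linear maps. -/
structure BialgData (k : Type) [Field k] (H : Type) [AddCommGroup H] [Module k H] where
  mul : H ⊗[k] H →ₗ[k] H
  one : H
  comul : H →ₗ[k] H ⊗[k] H
  counit : H →ₗ[k] k

namespace BialgData

variable {k : Type} [Field k] {H : Type} [AddCommGroup H] [Module k H]

/-- The axioms making `BialgData` an honest bialgebra. -/
structure IsBialgebra (B : BialgData k H) : Prop where
  mul_assoc : ∀ x y z : H, B.mul (B.mul (x ⊗ₜ y) ⊗ₜ z) = B.mul (x ⊗ₜ B.mul (y ⊗ₜ z))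
  one_mul : ∀ x : H, B.mul (B.one ⊗ₜ x) = x
  mul_one : ∀ x : H, B.mul (x ⊗ₜ B.one) = x
  coassoc : ∀ x : H,
    (TensorProduct.assoc k H H H) ((TensorProduct.map B.comul LinearMap.id) (B.comul x))
      = (TensorProduct.map LinearMap.id B.comul) (B.comul x)
  counit_comul : ∀ x : H,
    (TensorProduct.lid k H) ((TensorProduct.map B.counit LinearMap.id) (B.comul x)) = x
  comul_counit : ∀ x : H,
    (TensorProduct.rid k H) ((TensorProduct.map LinearMap.id B.counit) (B.comul x)) = x
  comul_mul : ∀ x y : H,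
    B.comul (B.mul (x ⊗ₜ y)) =
      (TensorProduct.map B.mul B.mul)
        ((TensorProduct.tensorTensorTensorComm k H H H H) (B.comul x ⊗ₜ B.comul y))
  comul_one : B.comul B.one = B.one ⊗ₜ B.one
  counit_mul : ∀ x y : H, B.counit (B.mul (x ⊗ₜ y)) = B.counit x * B.counit y
  counit_one : B.counit B.one = 1

/-- Convolution product of linear endomorphisms: `f ∗ g = mul ∘ (f ⊗ g) ∘ comul`. -/
def conv (B : BialgData k H) (f g : H →ₗ[k] H) : H →ₗ[k] H :=
  B.mul ∘ₗ TensorProduct.map f g ∘ₗ B.comul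

/-- `T` is a weak antipode: `id ∗ T ∗ id = id` and `T ∗ id ∗ T = T`. -/
def IsWeakAntipode (B : BialgData k H) (T : H →ₗ[k] H) : Prop :=
  B.conv (B.conv LinearMap.id T) LinearMap.id = LinearMap.id ∧
    B.conv (B.conv T LinearMap.id) T = T

/-- `T` is an anti-bialgebra morphism: `T(xy) = T(y)T(x)`, `T(1) = 1`,
`Δ(T x) = Σ T(x'') ⊗ T(x')` and `ε ∘ T = ε`. -/
def IsAntiBialgebraHom (B : BialgData k H) (T : H →ₗ[k] H) : Prop :=
  (∀ x y : H, T (B.mul (x ⊗ₜ y)) = B.mul (T y ⊗ₜ T x)) ∧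
  T B.one = B.one ∧
  (∀ x : H, B.comul (T x) =
    (TensorProduct.comm k H H) ((TensorProduct.map T T) (B.comul x))) ∧
  ∀ x : H, B.counit (T x) = B.counit x

/-- `H` is perfect: `T` is an anti-bialgebra morphism and `(id ∗ T)(H) ⊆ C(H)`,
i.e. `Σ x'T(x'')` is central for every `x`. -/
def Perfect (B : BialgData k H) (T : H →ₗ[k] H) : Prop :=
  B.IsAntiBialgebraHom T ∧
    ∀ x y : H,
      B.mul ((B.conv LinearMap.id T) x ⊗ₜ y) = B.mul (y ⊗ₜ (B.conv LinearMap.id T) x)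

/-- `H` is coperfect: `T` is an anti-bialgebra morphism and
`Σ x'T(x'') ⊗ x''' = Σ x''T(x''') ⊗ x'` for every `x`. -/
def Coperfect (B : BialgData k H) (T : H →ₗ[k] H) : Prop :=
  B.IsAntiBialgebraHom T ∧
    ∀ x : H,
      (TensorProduct.map (B.conv LinearMap.id T) LinearMap.id) (B.comul x)
        = (TensorProduct.comm k H H)
            ((TensorProduct.map LinearMap.id (B.conv LinearMap.id T)) (B.comul x))

/-- `H` is biperfect: perfect and coperfect. -/
def Biperfect (B : BialgData k H) (T : H →ₗ[k] H) : Prop :=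
  B.Perfect T ∧ B.Coperfect T

/-- The opposite bialgebra `H^op`: same coalgebra, opposite multiplication. -/
def op (B : BialgData k H) : BialgData k H :=
  { B with mul := B.mul ∘ₗ (TensorProduct.comm k H H).toLinearMap }

/-- The co-opposite bialgebra `H^cop`: same algebra, opposite comultiplication. -/
def cop (B : BialgData k H) : BialgData k H :=
  { B with comul := (TensorProduct.comm k H H).toLinearMap ∘ₗ B.comul }

/-- `H` is commutative. -/
def Commutative (B : BialgData k H) : Prop :=
  ∀ x y : H, B.mul (x ⊗ₜ y) = B.mul (y ⊗ₜ x)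

/-- `H` is cocommutative. -/
def Cocommutative (B : BialgData k H) : Prop :=
  ∀ x : H, (TensorProduct.comm k H H) (B.comul x) = B.comul x

/-- The dual weak Hopf algebra structure on `H* = Module.Dual k H` (for `H` finite
dimensional): convolution multiplication `(fg)(x) = Σ f(x')g(x'')`, unit `ε`,
comultiplication dual to the multiplication of `H`, counit `f ↦ f 1`. -/
def dual (B : BialgData k H) [FiniteDimensional k H] :
    BialgData k (Module.Dual k H) where
  mul := B.comul.dualMap ∘ₗ TensorProduct.dualDistrib k H H
  one := B.counit
  comul := ((TensorProduct.dualDistribEquiv k H H).symm :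
      Module.Dual k (H ⊗[k] H) →ₗ[k] Module.Dual k H ⊗[k] Module.Dual k H) ∘ₗ
    B.mul.dualMap
  counit := Module.Dual.eval k H B.one

section Reshuffle

variable (k)
variable (M N P : Type) [AddCommGroup M] [AddCommGroup N] [AddCommGroup P]
  [Module k M] [Module k N] [Module k P]

/-- `(u ⊗ v) ⊗ w ↦ (u ⊗ w) ⊗ v`. -/
def swap23 : (M ⊗[k] N) ⊗[k] P →ₗ[k] (M ⊗[k] P) ⊗[k] N :=
  ((TensorProduct.assoc k M P N).symm : M ⊗[k] (P ⊗[k] N) →ₗ[k] (M ⊗[k] P) ⊗[k] N) ∘ₗ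
    (TensorProduct.map LinearMap.id ((TensorProduct.comm k N P) : N ⊗[k] P →ₗ[k] P ⊗[k] N)) ∘ₗ
      ((TensorProduct.assoc k M N P) : (M ⊗[k] N) ⊗[k] P →ₗ[k] M ⊗[k] (N ⊗[k] P))

/-- `(u ⊗ v) ⊗ w ↦ (w ⊗ u) ⊗ v`. -/
def rot3 : (M ⊗[k] N) ⊗[k] P →ₗ[k] (P ⊗[k] M) ⊗[k] N :=
  ((TensorProduct.assoc k P M N).symm : P ⊗[k] (M ⊗[k] N) →ₗ[k] (P ⊗[k] M) ⊗[k] N) ∘ₗ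
    ((TensorProduct.comm k (M ⊗[k] N) P) : (M ⊗[k] N) ⊗[k] P →ₗ[k] P ⊗[k] (M ⊗[k] N))

end Reshuffle

/-- The iterated comultiplication `x ↦ (x' ⊗ x'') ⊗ x'''`. -/
def comul2 (B : BialgData k H) : H →ₗ[k] (H ⊗[k] H) ⊗[k] H :=
  (TensorProduct.map B.comul LinearMap.id) ∘ₗ B.comul

/-- The convolution multiplication on `H*`: `(fg)(x) = Σ f(x') g(x'')`. -/
def dualMul (B : BialgData k H) :
    Module.Dual k H ⊗[k] Module.Dual k H →ₗ[k] Module.Dual k H :=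
  B.comul.dualMap ∘ₗ TensorProduct.dualDistrib k H H

/-- The comultiplication on `H*` dual to the multiplication of `H`. -/
def dualComul (B : BialgData k H) [FiniteDimensional k H] :
    Module.Dual k H →ₗ[k] Module.Dual k H ⊗[k] Module.Dual k H :=
  ((TensorProduct.dualDistribEquiv k H H).symm :
      Module.Dual k (H ⊗[k] H) →ₗ[k] Module.Dual k H ⊗[k] Module.Dual k H) ∘ₗ
    B.mul.dualMap

/-- `u ⊗ v ↦ (x ↦ T⁻¹(u) · x · v)`, where `Tinv = T⁻¹`. -/
def conjLin (B : BialgData k H) (Tinv : H →ₗ[k] H) : H ⊗[k] H →ₗ[k] (H →ₗ[k] H) :=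
  TensorProduct.lift
    ((((LinearMap.llcomp k H H H) ∘ₗ (TensorProduct.curry B.mul).flip).compl₂
        ((TensorProduct.curry B.mul) ∘ₗ Tinv)).flip)

/-- `g ⊗ (u ⊗ v) ↦ g(T⁻¹(u) · ? · v)`. -/
def dualConj (B : BialgData k H) (Tinv : H →ₗ[k] H) :
    Module.Dual k H ⊗[k] (H ⊗[k] H) →ₗ[k] Module.Dual k H :=
  (TensorProduct.lift (LinearMap.llcomp k H H k)) ∘ₗ
    (TensorProduct.map LinearMap.id (B.conjLin Tinv))

/-- `a ↦ (a''' ⊗ a') ⊗ a''`. -/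
def comul2rot (B : BialgData k H) : H →ₗ[k] (H ⊗[k] H) ⊗[k] H :=
  (BialgData.rot3 k H H H) ∘ₗ B.comul2

/-- The multiplication of the quantum double `D(H) = H^{*cop} ∞ H`:
`(f ∞ a)(g ∞ b) = Σ f · g(T⁻¹(a''') ? a') ∞ a'' b`. -/
def doubleMul (B : BialgData k H) (Tinv : H →ₗ[k] H) :
    (Module.Dual k H ⊗[k] H) ⊗[k] (Module.Dual k H ⊗[k] H) →ₗ[k]
      Module.Dual k H ⊗[k] H :=
  (TensorProduct.map (B.dualMul) B.mul) ∘ₗ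
  (TensorProduct.map ((TensorProduct.comm k (Module.Dual k H) (Module.Dual k H)) :
      Module.Dual k H ⊗[k] Module.Dual k H →ₗ[k] Module.Dual k H ⊗[k] Module.Dual k H)
    (LinearMap.id : H ⊗[k] H →ₗ[k] H ⊗[k] H)) ∘ₗ
  ((TensorProduct.tensorTensorTensorComm k (Module.Dual k H) H (Module.Dual k H) H) :
    (Module.Dual k H ⊗[k] H) ⊗[k] (Module.Dual k H ⊗[k] H) →ₗ[k]
      (Module.Dual k H ⊗[k] Module.Dual k H) ⊗[k] (H ⊗[k] H)) ∘ₗ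
  (TensorProduct.map
    ((TensorProduct.map (B.dualConj Tinv) LinearMap.id) ∘ₗ
      ((TensorProduct.assoc k (Module.Dual k H) (H ⊗[k] H) H).symm :
        Module.Dual k H ⊗[k] ((H ⊗[k] H) ⊗[k] H) →ₗ[k]
          (Module.Dual k H ⊗[k] (H ⊗[k] H)) ⊗[k] H))
    (LinearMap.id : Module.Dual k H ⊗[k] H →ₗ[k] Module.Dual k H ⊗[k] H)) ∘ₗ
  ((TensorProduct.tensorTensorTensorComm k (Module.Dual k H) (Module.Dual k H)
      ((H ⊗[k] H) ⊗[k] H) H) :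
    (Module.Dual k H ⊗[k] Module.Dual k H) ⊗[k] (((H ⊗[k] H) ⊗[k] H) ⊗[k] H) →ₗ[k]
      (Module.Dual k H ⊗[k] ((H ⊗[k] H) ⊗[k] H)) ⊗[k] (Module.Dual k H ⊗[k] H)) ∘ₗ
  (TensorProduct.map (LinearMap.id : Module.Dual k H ⊗[k] Module.Dual k H →ₗ[k]
      Module.Dual k H ⊗[k] Module.Dual k H)
    (TensorProduct.map B.comul2rot (LinearMap.id : H →ₗ[k] H))) ∘ₗ
  (TensorProduct.map ((TensorProduct.comm k (Module.Dual k H) (Module.Dual k H)) :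
      Module.Dual k H ⊗[k] Module.Dual k H →ₗ[k] Module.Dual k H ⊗[k] Module.Dual k H)
    (LinearMap.id : H ⊗[k] H →ₗ[k] H ⊗[k] H)) ∘ₗ
  ((TensorProduct.tensorTensorTensorComm k (Module.Dual k H) H (Module.Dual k H) H) :
    (Module.Dual k H ⊗[k] H) ⊗[k] (Module.Dual k H ⊗[k] H) →ₗ[k]
      (Module.Dual k H ⊗[k] Module.Dual k H) ⊗[k] (H ⊗[k] H))

/-- The comultiplication of the quantum double `D(H) = H^{*cop} ∞ H`, using the
coproduct of `H^{*cop}` on the first factor. -/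
def doubleComul (B : BialgData k H) [FiniteDimensional k H] :
    Module.Dual k H ⊗[k] H →ₗ[k]
      (Module.Dual k H ⊗[k] H) ⊗[k] (Module.Dual k H ⊗[k] H) :=
  ((TensorProduct.tensorTensorTensorComm k (Module.Dual k H) (Module.Dual k H) H H) :
      (Module.Dual k H ⊗[k] Module.Dual k H) ⊗[k] (H ⊗[k] H) →ₗ[k]
        (Module.Dual k H ⊗[k] H) ⊗[k] (Module.Dual k H ⊗[k] H)) ∘ₗ
    (TensorProduct.map
      (((TensorProduct.comm k (Module.Dual k H) (Module.Dual k H)) :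
          Module.Dual k H ⊗[k] Module.Dual k H →ₗ[k]
            Module.Dual k H ⊗[k] Module.Dual k H) ∘ₗ B.dualComul)
      B.comul)

/-- The unit `ε ∞ 1` of the quantum double. -/
def doubleOne (B : BialgData k H) : Module.Dual k H ⊗[k] H :=
  B.counit ⊗ₜ B.one

/-- Componentwise multiplication on `D(H) ⊗ D(H)`. -/
def doubleMul2 (B : BialgData k H) (Tinv : H →ₗ[k] H) :
    ((Module.Dual k H ⊗[k] H) ⊗[k] (Module.Dual k H ⊗[k] H)) ⊗[k]
        ((Module.Dual k H ⊗[k] H) ⊗[k] (Module.Dual k H ⊗[k] H)) →ₗ[k]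
      (Module.Dual k H ⊗[k] H) ⊗[k] (Module.Dual k H ⊗[k] H) :=
  (TensorProduct.map (B.doubleMul Tinv) (B.doubleMul Tinv)) ∘ₗ
    ((TensorProduct.tensorTensorTensorComm k (Module.Dual k H ⊗[k] H)
        (Module.Dual k H ⊗[k] H) (Module.Dual k H ⊗[k] H) (Module.Dual k H ⊗[k] H)) :
      ((Module.Dual k H ⊗[k] H) ⊗[k] (Module.Dual k H ⊗[k] H)) ⊗[k]
          ((Module.Dual k H ⊗[k] H) ⊗[k] (Module.Dual k H ⊗[k] H)) →ₗ[k]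
        ((Module.Dual k H ⊗[k] H) ⊗[k] (Module.Dual k H ⊗[k] H)) ⊗[k]
          ((Module.Dual k H ⊗[k] H) ⊗[k] (Module.Dual k H ⊗[k] H)))

/-- Componentwise multiplication on `D(H) ⊗ D(H) ⊗ D(H)` (associated to the left). -/
def doubleMul3 (B : BialgData k H) (Tinv : H →ₗ[k] H) :
    (((Module.Dual k H ⊗[k] H) ⊗[k] (Module.Dual k H ⊗[k] H)) ⊗[k]
          (Module.Dual k H ⊗[k] H)) ⊗[k]
        (((Module.Dual k H ⊗[k] H) ⊗[k] (Module.Dual k H ⊗[k] H)) ⊗[k]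
          (Module.Dual k H ⊗[k] H)) →ₗ[k]
      ((Module.Dual k H ⊗[k] H) ⊗[k] (Module.Dual k H ⊗[k] H)) ⊗[k]
        (Module.Dual k H ⊗[k] H) :=
  (TensorProduct.map (B.doubleMul2 Tinv) (B.doubleMul Tinv)) ∘ₗ
    ((TensorProduct.tensorTensorTensorComm k
        ((Module.Dual k H ⊗[k] H) ⊗[k] (Module.Dual k H ⊗[k] H)) (Module.Dual k H ⊗[k] H)
        ((Module.Dual k H ⊗[k] H) ⊗[k] (Module.Dual k H ⊗[k] H)) (Module.Dual k H ⊗[k] H)) :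
      (((Module.Dual k H ⊗[k] H) ⊗[k] (Module.Dual k H ⊗[k] H)) ⊗[k]
            (Module.Dual k H ⊗[k] H)) ⊗[k]
          (((Module.Dual k H ⊗[k] H) ⊗[k] (Module.Dual k H ⊗[k] H)) ⊗[k]
            (Module.Dual k H ⊗[k] H)) →ₗ[k]
        (((Module.Dual k H ⊗[k] H) ⊗[k] (Module.Dual k H ⊗[k] H)) ⊗[k]
            ((Module.Dual k H ⊗[k] H) ⊗[k] (Module.Dual k H ⊗[k] H))) ⊗[k]
          ((Module.Dual k H ⊗[k] H) ⊗[k] (Module.Dual k H ⊗[k] H)))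

end BialgData

section Pairing

open BialgData

variable {k : Type} [Field k] {X A : Type}
  [AddCommGroup X] [Module k X] [AddCommGroup A] [Module k A]

/-- A weak Hopf pair `(X, A)`: a nondegenerate bilinear form `⟨·,·⟩ : X × A → k`
satisfying `⟨x, ab⟩ = Σ ⟨x', a⟩⟨x'', b⟩`, `⟨x, 1⟩ = ε(x)`,
`⟨xy, a⟩ = Σ ⟨x, a'⟩⟨y, a''⟩`, `⟨1, a⟩ = ε(a)` and `⟨S_X x, a⟩ = ⟨x, S_A a⟩`. -/
structure IsWeakHopfPair (BX : BialgData k X) (BA : BialgData k A)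
    (SX : X →ₗ[k] X) (SA : A →ₗ[k] A) (p : X →ₗ[k] A →ₗ[k] k) : Prop where
  nondegen_left : ∀ x : X, (∀ a : A, p x a = 0) → x = 0
  nondegen_right : ∀ a : A, (∀ x : X, p x a = 0) → a = 0
  pair_mul_right : ∀ (x : X) (a b : A),
    p x (BA.mul (a ⊗ₜ b)) =
      (TensorProduct.lid k k) ((TensorProduct.map (p.flip a) (p.flip b)) (BX.comul x))
  pair_one_right : ∀ x : X, p x BA.one = BX.counit x
  pair_mul_left : ∀ (x y : X) (a : A),
    p (BX.mul (x ⊗ₜ y)) a =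
      (TensorProduct.lid k k) ((TensorProduct.map (p x) (p y)) (BA.comul a))
  pair_one_left : ∀ a : A, p BX.one a = BA.counit a
  pair_antipode : ∀ (x : X) (a : A), p (SX x) a = p x (SA a)

/-- A weak Hopf skew-pair `(X, A)` (with `S_A` invertible, with inverse `SAinv`):
as a weak Hopf pair but with `⟨x, ab⟩ = Σ ⟨x'', a⟩⟨x', b⟩` and
`⟨S_X x, a⟩ = ⟨x, S_A⁻¹ a⟩`. -/
structure IsWeakHopfSkewPair (BX : BialgData k X) (BA : BialgData k A)
    (SX : X →ₗ[k] X) (SAinv : A →ₗ[k] A) (p : X →ₗ[k] A →ₗ[k] k) : Prop where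
  nondegen_left : ∀ x : X, (∀ a : A, p x a = 0) → x = 0
  nondegen_right : ∀ a : A, (∀ x : X, p x a = 0) → a = 0
  pair_mul_right : ∀ (x : X) (a b : A),
    p x (BA.mul (a ⊗ₜ b)) =
      (TensorProduct.lid k k) ((TensorProduct.map (p.flip b) (p.flip a)) (BX.comul x))
  pair_one_right : ∀ x : X, p x BA.one = BX.counit x
  pair_mul_left : ∀ (x y : X) (a : A),
    p (BX.mul (x ⊗ₜ y)) a =
      (TensorProduct.lid k k) ((TensorProduct.map (p x) (p y)) (BA.comul a))
  pair_one_left : ∀ a : A, p BX.one a = BA.counit a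
  pair_antipode : ∀ (x : X) (a : A), p (SX x) a = p x (SAinv a)

variable (BX : BialgData k X) (BA : BialgData k A)
  (SX : X →ₗ[k] X) (SAinv : A →ₗ[k] A) (p : X →ₗ[k] A →ₗ[k] k)

/-- Auxiliary map `x ↦ Σ ⟨x' · S_X(x'''), ·⟩ ⊗ x'' ∈ A* ⊗ X`. -/
def lactAux : X →ₗ[k] Module.Dual k A ⊗[k] X :=
  (TensorProduct.map (p ∘ₗ BX.mul ∘ₗ TensorProduct.map LinearMap.id SX) LinearMap.id) ∘ₗ
    (BialgData.swap23 k X X X) ∘ₗ BX.comul2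

/-- The left action `a ▷ x = Σ ⟨x' · S_X(x'''), a⟩ x''` of `A` on `X`,
as a linear map `A ⊗ X → X`. -/
def lact : A ⊗[k] X →ₗ[k] X :=
  ((TensorProduct.lid k X) : k ⊗[k] X →ₗ[k] X) ∘ₗ
    (TensorProduct.map (contractLeft k A) LinearMap.id) ∘ₗ
      (TensorProduct.map ((TensorProduct.comm k A (Module.Dual k A)) :
          A ⊗[k] Module.Dual k A →ₗ[k] Module.Dual k A ⊗[k] A) LinearMap.id) ∘ₗ
        ((TensorProduct.assoc k A (Module.Dual k A) X).symm :
          A ⊗[k] (Module.Dual k A ⊗[k] X) →ₗ[k] (A ⊗[k] Module.Dual k A) ⊗[k] X) ∘ₗ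
          (TensorProduct.map LinearMap.id (lactAux BX SX p))

/-- Auxiliary map `a ↦ Σ ⟨·, S_A⁻¹(a''') · a'⟩ ⊗ a'' ∈ X* ⊗ A`. -/
def ractAux : A →ₗ[k] Module.Dual k X ⊗[k] A :=
  (TensorProduct.map (p.flip ∘ₗ BA.mul ∘ₗ TensorProduct.map SAinv LinearMap.id)
      LinearMap.id) ∘ₗ
    (BialgData.rot3 k A A A) ∘ₗ BA.comul2

/-- The right action `a ◁ x = Σ ⟨x, S_A⁻¹(a''') a'⟩ a''` of `X` on `A`,
as a linear map `A ⊗ X → A`. -/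
def ract : A ⊗[k] X →ₗ[k] A :=
  ((TensorProduct.lid k A) : k ⊗[k] A →ₗ[k] A) ∘ₗ
    (TensorProduct.map (contractLeft k X) LinearMap.id) ∘ₗ
      (BialgData.swap23 k (Module.Dual k X) A X) ∘ₗ
        (TensorProduct.map (ractAux BA SAinv p) LinearMap.id)

end Pairing

namespace QDaux
open TensorProduct
variable {k : Type} [Field k] {H : Type} [AddCommGroup H] [Module k H]
variable (B : BialgData k H)

lemma conjLin_tmul (Tinv : H →ₗ[k] H) (u v x : H) :
    B.conjLin Tinv (u ⊗ₜ v) x = B.mul (B.mul (Tinv u ⊗ₜ x) ⊗ₜ v) := by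
  simp [BialgData.conjLin]

lemma dualConj_tmul (Tinv : H →ₗ[k] H) (g : Module.Dual k H) (u v x : H) :
    B.dualConj Tinv (g ⊗ₜ (u ⊗ₜ v)) x = g (B.mul (B.mul (Tinv u ⊗ₜ x) ⊗ₜ v)) := by
  simp [BialgData.dualConj, conjLin_tmul]

lemma dualMul_tmul_apply (f g : Module.Dual k H) (x : H) :
    B.dualMul (f ⊗ₜ g) x = TensorProduct.dualDistrib k H H (f ⊗ₜ g) (B.comul x) := by
  simp [BialgData.dualMul]

end QDaux
namespace QDaux2
open TensorProduct QDaux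
variable {k : Type} [Field k] {H : Type} [AddCommGroup H] [Module k H]
variable (B : BialgData k H)

lemma dualDistrib_counit_right (f : Module.Dual k H) (t : H ⊗[k] H) :
    TensorProduct.dualDistrib k H H (f ⊗ₜ B.counit) t
      = f ((TensorProduct.rid k H) ((TensorProduct.map LinearMap.id B.counit) t)) := by
  induction t using TensorProduct.induction_on with
  | zero => simp
  | tmul u v => simp [mul_comm]
  | add s t hs ht => simp [hs, ht]

lemma dualDistrib_counit_left (g : Module.Dual k H) (t : H ⊗[k] H) :
    TensorProduct.dualDistrib k H H (B.counit ⊗ₜ g) t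
      = g ((TensorProduct.lid k H) ((TensorProduct.map B.counit LinearMap.id) t)) := by
  induction t using TensorProduct.induction_on with
  | zero => simp
  | tmul u v => simp
  | add s t hs ht => simp [hs, ht]

lemma dualMul_counit_right (hB : B.IsBialgebra) (f : Module.Dual k H) :
    B.dualMul (f ⊗ₜ B.counit) = f := by
  ext x
  rw [dualMul_tmul_apply, dualDistrib_counit_right, hB.comul_counit]

lemma dualMul_counit_left (hB : B.IsBialgebra) (g : Module.Dual k H) :
    B.dualMul (B.counit ⊗ₜ g) = g := by
  ext x
  rw [dualMul_tmul_apply, dualDistrib_counit_left, hB.counit_comul]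

lemma Tinv_one (T Tinv : H →ₗ[k] H) (hanti : B.IsAntiBialgebraHom T)
    (hinv₁ : Tinv ∘ₗ T = LinearMap.id) : Tinv B.one = B.one := by
  have h : Tinv (T B.one) = B.one := congrArg (fun L : H →ₗ[k] H => L B.one) hinv₁
  rwa [hanti.2.1] at h

lemma counit_Tinv (T Tinv : H →ₗ[k] H) (hanti : B.IsAntiBialgebraHom T)
    (hinv₂ : T ∘ₗ Tinv = LinearMap.id) (x : H) : B.counit (Tinv x) = B.counit x := by
  have h := hanti.2.2.2 (Tinv x)
  have h2 : T (Tinv x) = x := congrArg (fun L : H →ₗ[k] H => L x) hinv₂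
  rw [h2] at h
  exact h.symm

lemma dualConj_counit (hB : B.IsBialgebra) (T Tinv : H →ₗ[k] H)
    (hanti : B.IsAntiBialgebraHom T) (hinv₂ : T ∘ₗ Tinv = LinearMap.id) (u v : H) :
    B.dualConj Tinv (B.counit ⊗ₜ (u ⊗ₜ v)) = (B.counit u * B.counit v) • B.counit := by
  ext x
  rw [dualConj_tmul, hB.counit_mul, hB.counit_mul, counit_Tinv B T Tinv hanti hinv₂]
  simp; ring

lemma dualConj_one_one (hB : B.IsBialgebra) (T Tinv : H →ₗ[k] H)
    (hanti : B.IsAntiBialgebraHom T) (hinv₁ : Tinv ∘ₗ T = LinearMap.id)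
    (g : Module.Dual k H) :
    B.dualConj Tinv (g ⊗ₜ (B.one ⊗ₜ B.one)) = g := by
  ext x
  rw [dualConj_tmul, Tinv_one B T Tinv hanti hinv₁, hB.one_mul, hB.mul_one]

lemma comul2rot_one (hB : B.IsBialgebra) :
    B.comul2rot B.one = (B.one ⊗ₜ B.one) ⊗ₜ B.one := by
  simp [BialgData.comul2rot, BialgData.comul2, BialgData.rot3, hB.comul_one]

end QDaux2
set_option synthInstance.maxHeartbeats 400000
set_option maxHeartbeats 1000000
namespace QDaux3
open TensorProduct QDaux QDaux2
variable {k : Type} [Field k] {H : Type} [AddCommGroup H] [Module k H]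
variable (B : BialgData k H)

lemma doubleMul_apply (Tinv : H →ₗ[k] H) (f g : Module.Dual k H) (a c : H) :
    B.doubleMul Tinv ((f ⊗ₜ a) ⊗ₜ (g ⊗ₜ c))
      = (TensorProduct.map (B.dualMul ∘ₗ TensorProduct.mk k (Module.Dual k H) (Module.Dual k H) f)
          (B.mul ∘ₗ (TensorProduct.mk k H H).flip c))
        ((TensorProduct.map (B.dualConj Tinv ∘ₗ TensorProduct.mk k (Module.Dual k H) (H ⊗[k] H) g)
          (LinearMap.id : H →ₗ[k] H)) (B.comul2rot a)) := by
  simp only [BialgData.doubleMul, LinearMap.coe_comp, Function.comp_apply,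
    tensorTensorTensorComm_tmul, map_tmul, LinearEquiv.coe_coe, comm_tmul, LinearMap.id_coe,
    id_eq]
  generalize B.comul2rot a = x
  induction x using TensorProduct.induction_on with
  | zero => simp
  | tmul s w =>
    induction s using TensorProduct.induction_on with
    | zero => simp
    | tmul u v => simp
    | add s t hs ht =>
      simp only [add_tmul, tmul_add, map_add, LinearMap.add_apply] at *
      rw [hs, ht]
  | add s t hs ht =>
    simp only [add_tmul, tmul_add, map_add, LinearMap.add_apply] at *
    rw [hs, ht]

end QDaux3
namespace QDaux4
open TensorProduct QDaux QDaux2 QDaux3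
variable {k : Type} [Field k] {H : Type} [AddCommGroup H] [Module k H]
variable (B : BialgData k H)

set_option synthInstance.maxHeartbeats 400000
set_option maxHeartbeats 1000000

lemma K1_aux (hB : B.IsBialgebra) (T Tinv : H →ₗ[k] H)
    (hanti : B.IsAntiBialgebraHom T) (hinv₂ : T ∘ₗ Tinv = LinearMap.id)
    (z : H) (s : H ⊗[k] H) :
    (TensorProduct.map (B.dualConj Tinv ∘ₗ TensorProduct.mk k (Module.Dual k H) (H ⊗[k] H) B.counit)
        (LinearMap.id : H →ₗ[k] H))
      ((BialgData.rot3 k H H H) (s ⊗ₜ z))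
      = B.counit ⊗ₜ (B.counit z •
          (TensorProduct.lid k H) ((TensorProduct.map B.counit LinearMap.id) s)) := by
  induction s using TensorProduct.induction_on with
  | zero => simp
  | tmul y₁ y₂ =>
    simp only [BialgData.rot3, LinearMap.coe_comp, Function.comp_apply, LinearEquiv.coe_coe,
      comm_tmul, assoc_symm_tmul, map_tmul, LinearMap.id_coe, id_eq, mk_apply, lid_tmul]
    rw [dualConj_counit B hB T Tinv hanti hinv₂]
    rw [TensorProduct.smul_tmul, smul_smul, mul_comm]
  | add s t hs ht =>
    simp only [add_tmul, map_add, hs, ht, tmul_add, smul_add]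

lemma K1 (hB : B.IsBialgebra) (T Tinv : H →ₗ[k] H)
    (hanti : B.IsAntiBialgebraHom T) (hinv₂ : T ∘ₗ Tinv = LinearMap.id) (a : H) :
    (TensorProduct.map (B.dualConj Tinv ∘ₗ TensorProduct.mk k (Module.Dual k H) (H ⊗[k] H) B.counit)
        (LinearMap.id : H →ₗ[k] H)) (B.comul2rot a) = B.counit ⊗ₜ a := by
  have key : ∀ t : H ⊗[k] H,
      (TensorProduct.map (B.dualConj Tinv ∘ₗ TensorProduct.mk k (Module.Dual k H) (H ⊗[k] H) B.counit)
          (LinearMap.id : H →ₗ[k] H))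
        ((BialgData.rot3 k H H H) ((TensorProduct.map B.comul LinearMap.id) t))
        = B.counit ⊗ₜ ((TensorProduct.rid k H) ((TensorProduct.map LinearMap.id B.counit) t)) := by
    intro t
    induction t using TensorProduct.induction_on with
    | zero => simp
    | tmul y z =>
      simp only [map_tmul, LinearMap.id_coe, id_eq, rid_tmul]
      rw [K1_aux B hB T Tinv hanti hinv₂, hB.counit_comul]
    | add s t hs ht => simp only [map_add, hs, ht, tmul_add]
  have h1 : B.comul2rot a
      = (BialgData.rot3 k H H H) ((TensorProduct.map B.comul LinearMap.id) (B.comul a)) := by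
    simp [BialgData.comul2rot, BialgData.comul2]
  rw [h1, key, hB.comul_counit]

lemma doubleMul_counit (hB : B.IsBialgebra) (T Tinv : H →ₗ[k] H)
    (hanti : B.IsAntiBialgebraHom T) (hinv₂ : T ∘ₗ Tinv = LinearMap.id)
    (f : Module.Dual k H) (a c : H) :
    B.doubleMul Tinv ((f ⊗ₜ a) ⊗ₜ (B.counit ⊗ₜ c)) = f ⊗ₜ B.mul (a ⊗ₜ c) := by
  rw [doubleMul_apply, K1 B hB T Tinv hanti hinv₂]
  simp only [map_tmul, LinearMap.coe_comp, Function.comp_apply, mk_apply, LinearMap.flip_apply]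
  rw [dualMul_counit_right B hB]

lemma doubleMul_one_left (hB : B.IsBialgebra) (T Tinv : H →ₗ[k] H)
    (hanti : B.IsAntiBialgebraHom T) (hinv₁ : Tinv ∘ₗ T = LinearMap.id)
    (f g : Module.Dual k H) (c : H) :
    B.doubleMul Tinv ((f ⊗ₜ B.one) ⊗ₜ (g ⊗ₜ c)) = B.dualMul (f ⊗ₜ g) ⊗ₜ c := by
  rw [doubleMul_apply, comul2rot_one B hB]
  simp only [map_tmul, LinearMap.coe_comp, Function.comp_apply, mk_apply, LinearMap.id_coe, id_eq,
    LinearMap.flip_apply]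
  rw [dualConj_one_one B hB T Tinv hanti hinv₁, hB.one_mul]

end QDaux4
namespace QDaux5
open TensorProduct QDaux QDaux2
variable {k : Type} [Field k] {H : Type} [AddCommGroup H] [Module k H]
variable (B : BialgData k H)

set_option synthInstance.maxHeartbeats 400000
set_option maxHeartbeats 1000000

/-- dual basis expansion of a functional -/
lemma dual_expansion {ι : Type} [Fintype ι] (b : Module.Basis ι k H) (F : Module.Dual k H) :
    ∑ i : ι, F (b i) • b.coord i = F := by
  ext x
  simp only [LinearMap.coe_sum, Finset.sum_apply, LinearMap.smul_apply, smul_eq_mul,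
    Module.Basis.coord_apply]
  calc ∑ i : ι, F (b i) * b.repr x i
      = F (∑ i : ι, b.repr x i • b i) := by
        rw [map_sum]; exact Finset.sum_congr rfl fun i _ => by rw [map_smul, smul_eq_mul, mul_comm]
    _ = F x := by rw [Module.Basis.sum_repr]

/-- basis expansion of a tensor in `H ⊗ H` -/
lemma tensor_expansion {ι : Type} [Fintype ι] (b : Module.Basis ι k H) [FiniteDimensional k H]
    (t : H ⊗[k] H) :
    ∑ j : ι, ∑ l : ι,
      (TensorProduct.dualDistrib k H H (b.coord j ⊗ₜ b.coord l) t) • (b j ⊗ₜ[k] b l) = t := by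
  induction t using TensorProduct.induction_on with
  | zero => simp
  | tmul u v =>
    simp only [dualDistrib_apply, Module.Basis.coord_apply]
    calc ∑ j : ι, ∑ l : ι, (b.repr u j * b.repr v l) • (b j ⊗ₜ[k] b l)
        = ∑ j : ι, (b.repr u j • b j) ⊗ₜ[k] (∑ l : ι, b.repr v l • b l) := by
          refine Finset.sum_congr rfl fun j _ => ?_
          rw [tmul_sum]
          refine Finset.sum_congr rfl fun l _ => ?_
          rw [mul_smul, ← tmul_smul, smul_tmul']
      _ = u ⊗ₜ[k] v := by
          rw [← sum_tmul, Module.Basis.sum_repr, Module.Basis.sum_repr]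
  | add s t hs ht =>
    simp only [map_add, add_smul, Finset.sum_add_distrib, hs, ht]

/-- formula for the dual comultiplication in coordinates -/
lemma dualComul_eq {ι : Type} [Fintype ι] (b : Module.Basis ι k H) [FiniteDimensional k H]
    (f : Module.Dual k H) :
    B.dualComul f = ∑ j : ι, ∑ l : ι,
      f (B.mul (b j ⊗ₜ b l)) • (b.coord j ⊗ₜ[k] b.coord l) := by
  simp only [BialgData.dualComul, LinearMap.coe_comp, Function.comp_apply, LinearEquiv.coe_coe]
  rw [LinearEquiv.symm_apply_eq]
  refine LinearMap.ext fun t => ?_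
  simp only [map_sum, map_smul, LinearMap.coe_sum, Finset.sum_apply, LinearMap.smul_apply,
    smul_eq_mul]
  have ht := tensor_expansion b t
  calc B.mul.dualMap f t = f (B.mul t) := rfl
    _ = f (B.mul (∑ j : ι, ∑ l : ι,
          (TensorProduct.dualDistrib k H H (b.coord j ⊗ₜ b.coord l) t) • (b j ⊗ₜ[k] b l))) := by
        rw [ht]
    _ = ∑ j : ι, ∑ l : ι,
          (TensorProduct.dualDistrib k H H (b.coord j ⊗ₜ b.coord l) t) * f (B.mul (b j ⊗ₜ[k] b l)) := by
        rw [map_sum, map_sum]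
        refine Finset.sum_congr rfl fun j _ => ?_
        rw [map_sum, map_sum]
        refine Finset.sum_congr rfl fun l _ => ?_
        rw [map_smul, map_smul, smul_eq_mul]
    _ = _ := by
        refine Finset.sum_congr rfl fun j _ => Finset.sum_congr rfl fun l _ => ?_
        exact mul_comm _ _

end QDaux5
namespace QDaux6
open TensorProduct QDaux QDaux2 QDaux5
variable {k : Type} [Field k] {H : Type} [AddCommGroup H] [Module k H]
variable (B : BialgData k H)

set_option synthInstance.maxHeartbeats 400000
set_option maxHeartbeats 1000000

lemma dualComul_counit {ι : Type} [Fintype ι] (b : Module.Basis ι k H) [FiniteDimensional k H]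
    (hB : B.IsBialgebra) :
    B.dualComul B.counit = B.counit ⊗ₜ B.counit := by
  rw [dualComul_eq B b]
  calc ∑ j : ι, ∑ l : ι, B.counit (B.mul (b j ⊗ₜ b l)) • (b.coord j ⊗ₜ[k] b.coord l)
      = ∑ j : ι, (B.counit (b j) • b.coord j) ⊗ₜ[k] (∑ l : ι, B.counit (b l) • b.coord l) := by
        refine Finset.sum_congr rfl fun j _ => ?_
        rw [tmul_sum]
        refine Finset.sum_congr rfl fun l _ => ?_
        rw [hB.counit_mul, mul_smul, ← tmul_smul, smul_tmul']
    _ = B.counit ⊗ₜ B.counit := by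
        rw [← sum_tmul]
        rw [show ∑ i : ι, B.counit (b i) • b.coord i = B.counit from dual_expansion b B.counit]

lemma tttComm_left_pair (g₁ g₂ : Module.Dual k H) (t : H ⊗[k] H) :
    (TensorProduct.tensorTensorTensorComm k (Module.Dual k H) (Module.Dual k H) H H)
        ((g₁ ⊗ₜ g₂) ⊗ₜ t)
      = (TensorProduct.map (TensorProduct.mk k (Module.Dual k H) H g₁)
          (TensorProduct.mk k (Module.Dual k H) H g₂)) t := by
  induction t using TensorProduct.induction_on with
  | zero => simp
  | tmul u v => simp
  | add s t hs ht => simp only [tmul_add, map_add, hs, ht]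

lemma tttComm_right_ones (s : Module.Dual k H ⊗[k] Module.Dual k H) (w₁ w₂ : H) :
    (TensorProduct.tensorTensorTensorComm k (Module.Dual k H) (Module.Dual k H) H H)
        (s ⊗ₜ (w₁ ⊗ₜ w₂))
      = (TensorProduct.map ((TensorProduct.mk k (Module.Dual k H) H).flip w₁)
          ((TensorProduct.mk k (Module.Dual k H) H).flip w₂)) s := by
  induction s using TensorProduct.induction_on with
  | zero => simp
  | tmul g₁ g₂ => simp
  | add s t hs ht => simp only [add_tmul, map_add, hs, ht]

lemma doubleComul_counit_tmul {ι : Type} [Fintype ι] (b : Module.Basis ι k H) [FiniteDimensional k H]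
    (hB : B.IsBialgebra) (a : H) :
    B.doubleComul (B.counit ⊗ₜ a)
      = (TensorProduct.map (TensorProduct.mk k (Module.Dual k H) H B.counit)
          (TensorProduct.mk k (Module.Dual k H) H B.counit)) (B.comul a) := by
  simp only [BialgData.doubleComul, LinearMap.coe_comp, Function.comp_apply, map_tmul,
    LinearEquiv.coe_coe]
  rw [dualComul_counit B b hB]
  simp only [comm_tmul]
  exact tttComm_left_pair B.counit B.counit (B.comul a)

lemma doubleComul_tmul_one [FiniteDimensional k H] (hB : B.IsBialgebra) (f : Module.Dual k H) :
    B.doubleComul (f ⊗ₜ B.one)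
      = (TensorProduct.map ((TensorProduct.mk k (Module.Dual k H) H).flip B.one)
          ((TensorProduct.mk k (Module.Dual k H) H).flip B.one))
        ((TensorProduct.comm k (Module.Dual k H) (Module.Dual k H)) (B.dualComul f)) := by
  simp only [BialgData.doubleComul, LinearMap.coe_comp, Function.comp_apply, map_tmul,
    LinearEquiv.coe_coe]
  rw [hB.comul_one]
  exact tttComm_right_ones _ B.one B.one

lemma doubleMul3_apply (Tinv : H →ₗ[k] H)
    (p q r p' q' r' : Module.Dual k H ⊗[k] H) :
    B.doubleMul3 Tinv (((p ⊗ₜ q) ⊗ₜ r) ⊗ₜ ((p' ⊗ₜ q') ⊗ₜ r'))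
      = (B.doubleMul Tinv (p ⊗ₜ p') ⊗ₜ B.doubleMul Tinv (q ⊗ₜ q')) ⊗ₜ
          B.doubleMul Tinv (r ⊗ₜ r') := by
  simp [BialgData.doubleMul3, BialgData.doubleMul2]

end QDaux6
namespace QDaux7
open TensorProduct QDaux QDaux2 QDaux3 QDaux4 QDaux5 QDaux6

set_option synthInstance.maxHeartbeats 1000000
set_option maxHeartbeats 2000000

lemma sum_perm3 {ι : Type} [Fintype ι] {M : Type} [AddCommMonoid M] (G : ι → ι → ι → M) :
    (∑ i : ι, ∑ j : ι, ∑ l : ι, G l i j) = ∑ i : ι, ∑ j : ι, ∑ l : ι, G i j l := by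
  rw [show (∑ i : ι, ∑ j : ι, ∑ l : ι, G l i j) = ∑ i : ι, ∑ l : ι, ∑ j : ι, G l i j from
    Finset.sum_congr rfl fun i _ => Finset.sum_comm]
  exact Finset.sum_comm

variable {k : Type} [Field k] {H : Type} [AddCommGroup H] [Module k H] [FiniteDimensional k H]
variable (B : BialgData k H)

lemma target1 (T Tinv : H →ₗ[k] H) (hB : B.IsBialgebra)
    (hanti : B.IsAntiBialgebraHom T)
    (hinv₁ : Tinv ∘ₗ T = LinearMap.id) (hinv₂ : T ∘ₗ Tinv = LinearMap.id)
    {ι : Type} [Fintype ι] (b : Module.Basis ι k H) :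
    (TensorProduct.map B.doubleComul LinearMap.id)
        (∑ i : ι, (B.counit ⊗ₜ b i) ⊗ₜ[k] ((b.coord i) ⊗ₜ B.one))
      = B.doubleMul3 Tinv
          ((∑ i : ι, ((B.counit ⊗ₜ b i) ⊗ₜ[k] B.doubleOne) ⊗ₜ[k] ((b.coord i) ⊗ₜ B.one)) ⊗ₜ
           (∑ i : ι, (B.doubleOne ⊗ₜ[k] (B.counit ⊗ₜ b i)) ⊗ₜ[k] ((b.coord i) ⊗ₜ B.one))) := by
  have hone : B.doubleOne = B.counit ⊗ₜ B.one := rfl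
  have hL : (TensorProduct.map B.doubleComul LinearMap.id)
        (∑ i : ι, (B.counit ⊗ₜ b i) ⊗ₜ[k] ((b.coord i) ⊗ₜ B.one))
      = ∑ i : ι, ∑ j : ι, ∑ l : ι,
          (TensorProduct.dualDistrib k H H (b.coord j ⊗ₜ b.coord l) (B.comul (b i))) •
            (((B.counit ⊗ₜ[k] b j) ⊗ₜ[k] (B.counit ⊗ₜ[k] b l)) ⊗ₜ[k] ((b.coord i) ⊗ₜ[k] B.one)) := by
    rw [map_sum]
    refine Finset.sum_congr rfl fun i _ => ?_
    rw [map_tmul, LinearMap.id_coe, id_eq, doubleComul_counit_tmul B b hB]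
    conv_lhs => rw [← tensor_expansion b (B.comul (b i))]
    rw [map_sum, sum_tmul]
    refine Finset.sum_congr rfl fun j _ => ?_
    rw [map_sum, sum_tmul]
    refine Finset.sum_congr rfl fun l _ => ?_
    rw [map_smul, smul_tmul']
    simp [TensorProduct.mk_apply]
  have hRside : B.doubleMul3 Tinv
          ((∑ i : ι, ((B.counit ⊗ₜ b i) ⊗ₜ[k] B.doubleOne) ⊗ₜ[k] ((b.coord i) ⊗ₜ B.one)) ⊗ₜ
           (∑ i : ι, (B.doubleOne ⊗ₜ[k] (B.counit ⊗ₜ b i)) ⊗ₜ[k] ((b.coord i) ⊗ₜ B.one)))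
      = ∑ i : ι, ∑ j : ι, ∑ l : ι,
          (TensorProduct.dualDistrib k H H (b.coord i ⊗ₜ b.coord j) (B.comul (b l))) •
            (((B.counit ⊗ₜ[k] b i) ⊗ₜ[k] (B.counit ⊗ₜ[k] b j)) ⊗ₜ[k] ((b.coord l) ⊗ₜ[k] B.one)) := by
    rw [sum_tmul, map_sum]
    refine Finset.sum_congr rfl fun i _ => ?_
    rw [tmul_sum, map_sum]
    refine Finset.sum_congr rfl fun j _ => ?_
    rw [hone, doubleMul3_apply,
      doubleMul_counit B hB T Tinv hanti hinv₂,
      doubleMul_counit B hB T Tinv hanti hinv₂,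
      doubleMul_one_left B hB T Tinv hanti hinv₁,
      hB.mul_one, hB.one_mul]
    conv_lhs => rw [← dual_expansion b (B.dualMul (b.coord i ⊗ₜ b.coord j))]
    rw [sum_tmul, tmul_sum]
    refine Finset.sum_congr rfl fun l _ => ?_
    rw [dualMul_tmul_apply, ← smul_tmul', tmul_smul, smul_tmul']
  rw [hL, hRside]
  exact (sum_perm3 (fun a c d =>
    (TensorProduct.dualDistrib k H H (b.coord c ⊗ₜ b.coord d) (B.comul (b a))) •
      (((B.counit ⊗ₜ[k] b c) ⊗ₜ[k] (B.counit ⊗ₜ[k] b d)) ⊗ₜ[k] ((b.coord a) ⊗ₜ[k] B.one)))).symm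

end QDaux7
namespace QDaux8
open TensorProduct QDaux QDaux2 QDaux3 QDaux4 QDaux5 QDaux6 QDaux7

set_option synthInstance.maxHeartbeats 1000000
set_option maxHeartbeats 2000000

variable {k : Type} [Field k] {H : Type} [AddCommGroup H] [Module k H] [FiniteDimensional k H]
variable (B : BialgData k H)

lemma target2 (T Tinv : H →ₗ[k] H) (hB : B.IsBialgebra)
    (hanti : B.IsAntiBialgebraHom T)
    (hinv₁ : Tinv ∘ₗ T = LinearMap.id) (hinv₂ : T ∘ₗ Tinv = LinearMap.id)
    {ι : Type} [Fintype ι] (b : Module.Basis ι k H) :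
    (TensorProduct.assoc k (Module.Dual k H ⊗[k] H) (Module.Dual k H ⊗[k] H)
        (Module.Dual k H ⊗[k] H)).symm
      ((TensorProduct.map LinearMap.id B.doubleComul)
        (∑ i : ι, (B.counit ⊗ₜ b i) ⊗ₜ[k] ((b.coord i) ⊗ₜ B.one)))
      = B.doubleMul3 Tinv
          ((∑ i : ι, ((B.counit ⊗ₜ b i) ⊗ₜ[k] B.doubleOne) ⊗ₜ[k] ((b.coord i) ⊗ₜ B.one)) ⊗ₜ
           (∑ i : ι, ((B.counit ⊗ₜ b i) ⊗ₜ[k] ((b.coord i) ⊗ₜ B.one)) ⊗ₜ[k] B.doubleOne)) := by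
  have hone : B.doubleOne = B.counit ⊗ₜ B.one := rfl
  have vexp : ∀ x : H, x = ∑ l : ι, b.coord l x • b l := fun x => by
    simpa only [Module.Basis.coord_apply] using (b.sum_repr x).symm
  have hL : (TensorProduct.assoc k (Module.Dual k H ⊗[k] H) (Module.Dual k H ⊗[k] H)
        (Module.Dual k H ⊗[k] H)).symm
      ((TensorProduct.map LinearMap.id B.doubleComul)
        (∑ i : ι, (B.counit ⊗ₜ b i) ⊗ₜ[k] ((b.coord i) ⊗ₜ B.one)))
      = ∑ i : ι, ∑ j : ι, ∑ l : ι,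
          (b.coord i (B.mul (b j ⊗ₜ b l))) •
            (((B.counit ⊗ₜ[k] b i) ⊗ₜ[k] ((b.coord l) ⊗ₜ[k] B.one)) ⊗ₜ[k]
              ((b.coord j) ⊗ₜ[k] B.one)) := by
    rw [map_sum, map_sum]
    refine Finset.sum_congr rfl fun i _ => ?_
    rw [map_tmul, LinearMap.id_coe, id_eq, doubleComul_tmul_one B hB,
      dualComul_eq B b (b.coord i)]
    simp only [map_sum, map_smul, comm_tmul, map_tmul, LinearMap.flip_apply,
      TensorProduct.mk_apply]
    rw [tmul_sum, map_sum]
    refine Finset.sum_congr rfl fun j _ => ?_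
    rw [tmul_sum, map_sum]
    refine Finset.sum_congr rfl fun l _ => ?_
    rw [tmul_smul, map_smul, assoc_symm_tmul]
  have hR : B.doubleMul3 Tinv
          ((∑ i : ι, ((B.counit ⊗ₜ b i) ⊗ₜ[k] B.doubleOne) ⊗ₜ[k] ((b.coord i) ⊗ₜ B.one)) ⊗ₜ
           (∑ i : ι, ((B.counit ⊗ₜ b i) ⊗ₜ[k] ((b.coord i) ⊗ₜ B.one)) ⊗ₜ[k] B.doubleOne))
      = ∑ i : ι, ∑ j : ι, ∑ l : ι,
          (b.coord l (B.mul (b i ⊗ₜ b j))) •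
            (((B.counit ⊗ₜ[k] b l) ⊗ₜ[k] ((b.coord j) ⊗ₜ[k] B.one)) ⊗ₜ[k]
              ((b.coord i) ⊗ₜ[k] B.one)) := by
    rw [sum_tmul, map_sum]
    refine Finset.sum_congr rfl fun i _ => ?_
    rw [tmul_sum, map_sum]
    refine Finset.sum_congr rfl fun j _ => ?_
    rw [hone, doubleMul3_apply,
      doubleMul_counit B hB T Tinv hanti hinv₂,
      doubleMul_one_left B hB T Tinv hanti hinv₁,
      doubleMul_counit B hB T Tinv hanti hinv₂,
      dualMul_counit_left B hB, hB.one_mul]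
    conv_lhs => rw [vexp (B.mul (b i ⊗ₜ b j))]
    rw [tmul_sum, sum_tmul, sum_tmul]
    refine Finset.sum_congr rfl fun l _ => ?_
    simp only [tmul_smul, smul_tmul']
  rw [hL, hR]
  exact (sum_perm3 (fun a c d =>
    (b.coord a (B.mul (b c ⊗ₜ b d))) •
      (((B.counit ⊗ₜ[k] b a) ⊗ₜ[k] ((b.coord d) ⊗ₜ[k] B.one)) ⊗ₜ[k]
        ((b.coord c) ⊗ₜ[k] B.one)))).symm

end QDaux8

/-- `(Δ ⊗ id)(R) = R₁₃R₂₃` and `(id ⊗ Δ)(R) = R₁₃R₁₂` in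
`D(H)^{⊗3}`, for `R = Σ_i (ε ∞ e_i) ⊗ (e^i ∞ 1)`. -/
theorem quantumDouble_quasiRMatrix_coproduct
    {k : Type} [Field k] {H : Type} [AddCommGroup H] [Module k H]
    [FiniteDimensional k H]
    (B : BialgData k H) (T Tinv : H →ₗ[k] H)
    (hB : B.IsBialgebra) (hT : B.IsWeakAntipode T)
    (hanti : B.IsAntiBialgebraHom T)
    (hinv₁ : Tinv ∘ₗ T = LinearMap.id) (hinv₂ : T ∘ₗ Tinv = LinearMap.id)
    (hbp : B.Biperfect T)
    (ι : Type) [Fintype ι] (b : Module.Basis ι k H)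
    (R : (Module.Dual k H ⊗[k] H) ⊗[k] (Module.Dual k H ⊗[k] H))
    (hR : R = ∑ i : ι, (B.counit ⊗ₜ b i) ⊗ₜ[k] ((b.coord i) ⊗ₜ B.one))
    (R₁₂ R₁₃ R₂₃ : ((Module.Dual k H ⊗[k] H) ⊗[k] (Module.Dual k H ⊗[k] H)) ⊗[k]
      (Module.Dual k H ⊗[k] H))
    (hR12 : R₁₂ = ∑ i : ι,
      ((B.counit ⊗ₜ b i) ⊗ₜ[k] ((b.coord i) ⊗ₜ B.one)) ⊗ₜ[k] B.doubleOne)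
    (hR13 : R₁₃ = ∑ i : ι,
      ((B.counit ⊗ₜ b i) ⊗ₜ[k] B.doubleOne) ⊗ₜ[k] ((b.coord i) ⊗ₜ B.one))
    (hR23 : R₂₃ = ∑ i : ι,
      (B.doubleOne ⊗ₜ[k] (B.counit ⊗ₜ b i)) ⊗ₜ[k] ((b.coord i) ⊗ₜ B.one)) :
    (TensorProduct.map B.doubleComul LinearMap.id) R = B.doubleMul3 Tinv (R₁₃ ⊗ₜ R₂₃) ∧
    (TensorProduct.assoc k (Module.Dual k H ⊗[k] H) (Module.Dual k H ⊗[k] H)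
        (Module.Dual k H ⊗[k] H)).symm
      ((TensorProduct.map LinearMap.id B.doubleComul) R)
      = B.doubleMul3 Tinv (R₁₃ ⊗ₜ R₁₂) := by
  subst hR hR12 hR13 hR23
  exact ⟨QDaux7.target1 B T Tinv hB hanti hinv₁ hinv₂ b,
         QDaux8.target2 B T Tinv hB hanti hinv₁ hinv₂ b⟩
end
end

section
/- Let H be a finite-dimensional biperfect weak Hopf algebra over a field k with invertible weak antipode T, let {e_1, …, e_n} be a basis of H with dual basis {e_1*, …, e_n*} in H*, and in D(H) ⊗ D(H) set R = Σ_{i=1}^n (ε ∞ e_i) ⊗ (e_i* ∞ 1) and R̄ = Σ_{i=1}^n (ε ∞ e_i) ⊗ ((e_i* ∘ T) ∞ 1). Then R R̄ R = R and R̄ R R̄ = R̄; that is, R is a von Neumann regular element of the algebra D(H) ⊗ D(H) with generalized inverse R̄. -/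
noncomputable section

open TensorProduct

namespace QDAux

open BialgData

variable {k : Type} [Field k] {H : Type} [AddCommGroup H] [Module k H]

lemma conjLin_tmul (B : BialgData k H) (Tinv : H →ₗ[k] H) (u v x : H) :
    B.conjLin Tinv (u ⊗ₜ v) x = B.mul (B.mul (Tinv u ⊗ₜ x) ⊗ₜ v) := by
  simp only [BialgData.conjLin, TensorProduct.lift.tmul, LinearMap.flip_apply,
    LinearMap.compl₂_apply, LinearMap.llcomp_apply, LinearMap.comp_apply,
    TensorProduct.curry_apply]

lemma dualConj_tmul (B : BialgData k H) (Tinv : H →ₗ[k] H) (g : Module.Dual k H)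
    (u v x : H) :
    B.dualConj Tinv (g ⊗ₜ (u ⊗ₜ v)) x = g (B.mul (B.mul (Tinv u ⊗ₜ x) ⊗ₜ v)) := by
  simp only [BialgData.dualConj, LinearMap.comp_apply, TensorProduct.map_tmul,
    LinearMap.id_coe, id_eq, TensorProduct.lift.tmul, LinearMap.llcomp_apply,
    conjLin_tmul]

variable (B : BialgData k H) (T Tinv : H →ₗ[k] H)

lemma counit_Tinv (hanti : B.IsAntiBialgebraHom T)
    (hinv₂ : T ∘ₗ Tinv = LinearMap.id) (y : H) :
    B.counit (Tinv y) = B.counit y := by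
  have h : T (Tinv y) = y := by
    have := LinearMap.ext_iff.mp hinv₂ y
    simpa using this
  calc B.counit (Tinv y) = B.counit (T (Tinv y)) := (hanti.2.2.2 _).symm
    _ = B.counit y := by rw [h]

lemma Tinv_one (hanti : B.IsAntiBialgebraHom T)
    (hinv₁ : Tinv ∘ₗ T = LinearMap.id) : Tinv B.one = B.one := by
  have h : Tinv (T B.one) = B.one := by
    have := LinearMap.ext_iff.mp hinv₁ B.one
    simpa using this
  conv_lhs => rw [← hanti.2.1]
  exact h

lemma dualConj_counit (hB : B.IsBialgebra) (hanti : B.IsAntiBialgebraHom T)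
    (hinv₂ : T ∘ₗ Tinv = LinearMap.id) (u v : H) :
    B.dualConj Tinv (B.counit ⊗ₜ (u ⊗ₜ v))
      = (B.counit u * B.counit v) • B.counit := by
  ext x
  rw [dualConj_tmul]
  simp only [LinearMap.smul_apply, smul_eq_mul]
  rw [hB.counit_mul, hB.counit_mul, counit_Tinv B T Tinv hanti hinv₂]
  ring

lemma dualConj_one (hB : B.IsBialgebra) (hanti : B.IsAntiBialgebraHom T)
    (hinv₁ : Tinv ∘ₗ T = LinearMap.id) (g : Module.Dual k H) :
    B.dualConj Tinv (g ⊗ₜ (B.one ⊗ₜ B.one)) = g := by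
  ext x
  rw [dualConj_tmul, Tinv_one B T Tinv hanti hinv₁, hB.one_mul, hB.mul_one]

/-- collapse `u ⊗ v ↦ ε u * ε v`. -/
def c2 : H ⊗[k] H →ₗ[k] k :=
  (TensorProduct.lid k k).toLinearMap ∘ₗ TensorProduct.map B.counit B.counit

lemma c2_tmul (u v : H) : c2 B (u ⊗ₜ v) = B.counit u * B.counit v := by
  simp [c2, TensorProduct.lid_tmul, smul_eq_mul]

/-- `(u ⊗ v) ⊗ m ↦ (ε u * ε v) • m`. -/
def kap : (H ⊗[k] H) ⊗[k] H →ₗ[k] H :=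
  (TensorProduct.lid k H).toLinearMap ∘ₗ TensorProduct.map (c2 B) LinearMap.id

lemma kap_tmul (u v m : H) : kap B ((u ⊗ₜ v) ⊗ₜ m) = (B.counit u * B.counit v) • m := by
  simp [kap, c2_tmul]

lemma step5_eps (hB : B.IsBialgebra) (hanti : B.IsAntiBialgebraHom T)
    (hinv₂ : T ∘ₗ Tinv = LinearMap.id) (W : (H ⊗[k] H) ⊗[k] H) :
    (TensorProduct.map (B.dualConj Tinv) LinearMap.id)
      ((TensorProduct.assoc k (Module.Dual k H) (H ⊗[k] H) H).symm (B.counit ⊗ₜ W))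
      = B.counit ⊗ₜ kap B W := by
  induction W using TensorProduct.induction_on with
  | zero => simp
  | tmul p m =>
    induction p using TensorProduct.induction_on with
    | zero => simp
    | tmul u v =>
      rw [TensorProduct.assoc_symm_tmul, TensorProduct.map_tmul,
        dualConj_counit B T Tinv hB hanti hinv₂, kap_tmul]
      simp [TensorProduct.smul_tmul, TensorProduct.tmul_smul]
    | add p q hp hq =>
      rw [TensorProduct.add_tmul, TensorProduct.tmul_add, map_add, map_add, hp, hq,
        map_add, TensorProduct.tmul_add]
  | add W₁ W₂ h1 h2 =>
    rw [TensorProduct.tmul_add, map_add, map_add, h1, h2, map_add,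
      TensorProduct.tmul_add]

lemma kap_rot3_tmul (V : H ⊗[k] H) (z : H) :
    kap B ((BialgData.rot3 k H H H) (V ⊗ₜ z)) =
      B.counit z • (TensorProduct.lid k H)
        ((TensorProduct.map B.counit LinearMap.id) V) := by
  induction V using TensorProduct.induction_on with
  | zero => simp
  | tmul x y =>
    simp [BialgData.rot3, kap_tmul, mul_comm, mul_smul]
  | add V₁ V₂ h1 h2 =>
    rw [TensorProduct.add_tmul, map_add, map_add, h1, h2, map_add, map_add, smul_add]

lemma kap_comul2rot (hB : B.IsBialgebra) (a : H) :
    kap B (B.comul2rot a) = a := by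
  have key : ∀ u : H ⊗[k] H,
      kap B ((BialgData.rot3 k H H H) ((TensorProduct.map B.comul LinearMap.id) u))
        = (TensorProduct.rid k H)
            ((TensorProduct.map LinearMap.id B.counit) u) := by
    intro u
    induction u using TensorProduct.induction_on with
    | zero => simp
    | tmul p z =>
      rw [TensorProduct.map_tmul, kap_rot3_tmul, hB.counit_comul]
      simp [TensorProduct.rid_tmul]
    | add u₁ u₂ h1 h2 => rw [map_add, map_add, map_add, h1, h2, map_add, map_add]
  rw [BialgData.comul2rot, BialgData.comul2]
  simp only [LinearMap.comp_apply]
  rw [key (B.comul a), hB.comul_counit]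

lemma dualMul_counit_counit (hB : B.IsBialgebra) :
    B.dualMul (B.counit ⊗ₜ B.counit) = B.counit := by
  have key : ∀ u : H ⊗[k] H,
      TensorProduct.dualDistrib k H H (B.counit ⊗ₜ B.counit) u
        = B.counit ((TensorProduct.lid k H)
            ((TensorProduct.map B.counit LinearMap.id) u)) := by
    intro u
    induction u using TensorProduct.induction_on with
    | zero => simp
    | tmul x y => simp [TensorProduct.dualDistrib_apply, TensorProduct.lid_tmul]
    | add u₁ u₂ h1 h2 => rw [map_add, h1, h2, map_add, map_add, map_add]
  ext x
  rw [BialgData.dualMul]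
  simp only [LinearMap.comp_apply, LinearMap.dualMap_apply]
  rw [key (B.comul x), hB.counit_comul]

lemma doubleMul_eps (hB : B.IsBialgebra) (hanti : B.IsAntiBialgebraHom T)
    (hinv₂ : T ∘ₗ Tinv = LinearMap.id) (a b : H) :
    B.doubleMul Tinv ((B.counit ⊗ₜ a) ⊗ₜ (B.counit ⊗ₜ b))
      = B.counit ⊗ₜ B.mul (a ⊗ₜ b) := by
  rw [BialgData.doubleMul]
  simp only [LinearMap.comp_apply, LinearEquiv.coe_coe,
    TensorProduct.tensorTensorTensorComm_tmul, TensorProduct.map_tmul,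
    TensorProduct.comm_tmul, LinearMap.id_coe, id_eq]
  rw [step5_eps B T Tinv hB hanti hinv₂, kap_comul2rot B hB]
  simp only [TensorProduct.tensorTensorTensorComm_tmul, TensorProduct.map_tmul,
    TensorProduct.comm_tmul, LinearMap.id_coe, id_eq]
  erw [TensorProduct.comm_tmul]
  rw [dualMul_counit_counit B hB]

lemma comul2rot_one (hB : B.IsBialgebra) :
    B.comul2rot B.one = (B.one ⊗ₜ B.one) ⊗ₜ B.one := by
  rw [BialgData.comul2rot, BialgData.comul2]
  simp only [LinearMap.comp_apply, hB.comul_one, TensorProduct.map_tmul,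
    LinearMap.id_coe, id_eq, hB.comul_one]
  simp [BialgData.rot3]

lemma doubleMul_one (hB : B.IsBialgebra) (hanti : B.IsAntiBialgebraHom T)
    (hinv₁ : Tinv ∘ₗ T = LinearMap.id) (f g : Module.Dual k H) :
    B.doubleMul Tinv ((f ⊗ₜ B.one) ⊗ₜ (g ⊗ₜ B.one))
      = B.dualMul (f ⊗ₜ g) ⊗ₜ B.one := by
  rw [BialgData.doubleMul]
  simp only [LinearMap.comp_apply, LinearEquiv.coe_coe,
    TensorProduct.tensorTensorTensorComm_tmul, TensorProduct.map_tmul,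
    TensorProduct.comm_tmul, LinearMap.id_coe, id_eq]
  rw [comul2rot_one B hB]
  simp only [TensorProduct.assoc_symm_tmul, TensorProduct.map_tmul,
    LinearMap.id_coe, id_eq, TensorProduct.tensorTensorTensorComm_tmul,
    TensorProduct.comm_tmul]
  rw [dualConj_one B T Tinv hB hanti hinv₁, hB.one_mul]
  erw [TensorProduct.comm_tmul]


/-- product on `H ⊗ H*`: `(a ⊗ f)(b ⊗ g) = ab ⊗ fg`. -/
def mu (B : BialgData k H) :
    (H ⊗[k] Module.Dual k H) ⊗[k] (H ⊗[k] Module.Dual k H) →ₗ[k]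
      H ⊗[k] Module.Dual k H :=
  (TensorProduct.map B.mul B.dualMul) ∘ₗ
    (TensorProduct.tensorTensorTensorComm k H (Module.Dual k H) H
      (Module.Dual k H)).toLinearMap

lemma mu_tmul (a b : H) (f g : Module.Dual k H) :
    mu B ((a ⊗ₜ f) ⊗ₜ (b ⊗ₜ g)) = B.mul (a ⊗ₜ b) ⊗ₜ B.dualMul (f ⊗ₜ g) := by
  simp [mu]

/-- `a ⊗ f ↦ (ε ∞ a) ⊗ (f ∞ 1)`. -/
def Psi (B : BialgData k H) :
    H ⊗[k] Module.Dual k H →ₗ[k]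
      (Module.Dual k H ⊗[k] H) ⊗[k] (Module.Dual k H ⊗[k] H) :=
  TensorProduct.map (TensorProduct.mk k (Module.Dual k H) H B.counit)
    ((TensorProduct.mk k (Module.Dual k H) H).flip B.one)

lemma Psi_tmul (a : H) (f : Module.Dual k H) :
    Psi B (a ⊗ₜ f) = (B.counit ⊗ₜ a) ⊗ₜ (f ⊗ₜ B.one) := rfl

/-- `a ⊗ f ↦ (x ↦ f x • a)`. -/
def theta : H ⊗[k] Module.Dual k H →ₗ[k] (H →ₗ[k] H) :=
  dualTensorHom k H H ∘ₗ (TensorProduct.comm k H (Module.Dual k H)).toLinearMap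

lemma theta_tmul (a x : H) (f : Module.Dual k H) :
    theta (k := k) (a ⊗ₜ f) x = f x • a := by
  simp [theta, dualTensorHom_apply]

lemma theta_inj [FiniteDimensional k H] :
    Function.Injective (theta (k := k) (H := H)) := by
  have h : ⇑(theta (k := k) (H := H))
      = ⇑(dualTensorHomEquiv k H H) ∘ ⇑(TensorProduct.comm k H (Module.Dual k H)) := rfl
  rw [h]
  exact (dualTensorHomEquiv k H H).injective.comp
    (TensorProduct.comm k H (Module.Dual k H)).injective

lemma doubleMul2_Psi (hB : B.IsBialgebra) (hanti : B.IsAntiBialgebraHom T)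
    (hinv₁ : Tinv ∘ₗ T = LinearMap.id) (hinv₂ : T ∘ₗ Tinv = LinearMap.id)
    (u v : H ⊗[k] Module.Dual k H) :
    B.doubleMul2 Tinv (Psi B u ⊗ₜ Psi B v) = Psi B (mu B (u ⊗ₜ v)) := by
  induction u using TensorProduct.induction_on with
  | zero => simp
  | tmul a f =>
    induction v using TensorProduct.induction_on with
    | zero => simp
    | tmul b g =>
      rw [Psi_tmul, Psi_tmul, mu_tmul, Psi_tmul, BialgData.doubleMul2]
      simp only [LinearMap.comp_apply, LinearEquiv.coe_coe,
        TensorProduct.tensorTensorTensorComm_tmul, TensorProduct.map_tmul]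
      rw [doubleMul_eps B T Tinv hB hanti hinv₂,
        doubleMul_one B T Tinv hB hanti hinv₁]
    | add v₁ v₂ h1 h2 =>
      rw [map_add, TensorProduct.tmul_add, map_add, h1, h2, TensorProduct.tmul_add,
        map_add, map_add]
  | add u₁ u₂ h1 h2 =>
    rw [map_add, TensorProduct.add_tmul, map_add, h1, h2, TensorProduct.add_tmul,
      map_add, map_add]

lemma conv_add_left (f f' g : H →ₗ[k] H) :
    B.conv (f + f') g = B.conv f g + B.conv f' g := by
  ext x
  simp [BialgData.conv, TensorProduct.map_add_left]

lemma conv_add_right (f g g' : H →ₗ[k] H) :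
    B.conv f (g + g') = B.conv f g + B.conv f g' := by
  ext x
  simp [BialgData.conv, TensorProduct.map_add_right]

lemma theta_mu (u v : H ⊗[k] Module.Dual k H) :
    theta (mu B (u ⊗ₜ v)) = B.conv (theta u) (theta v) := by
  induction u using TensorProduct.induction_on with
  | zero => simp [BialgData.conv]
  | tmul a f =>
    induction v using TensorProduct.induction_on with
    | zero => simp [BialgData.conv]
    | tmul b g =>
      rw [mu_tmul]
      ext x
      rw [theta_tmul]
      have key : ∀ w : H ⊗[k] H,
          B.mul ((TensorProduct.map (theta (a ⊗ₜ f)) (theta (b ⊗ₜ g))) w)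
            = (TensorProduct.dualDistrib k H H (f ⊗ₜ g) w) • B.mul (a ⊗ₜ b) := by
        intro w
        induction w using TensorProduct.induction_on with
        | zero => simp
        | tmul x y =>
          rw [TensorProduct.map_tmul, theta_tmul, theta_tmul,
            TensorProduct.dualDistrib_apply]
          simp [TensorProduct.smul_tmul, TensorProduct.tmul_smul, smul_smul,
            mul_comm]
        | add w₁ w₂ h1 h2 => rw [map_add, map_add, h1, h2, map_add, add_smul]
      have hconv : B.conv (theta (a ⊗ₜ f)) (theta (b ⊗ₜ g)) x
          = (TensorProduct.dualDistrib k H H (f ⊗ₜ g) (B.comul x)) • B.mul (a ⊗ₜ b) := by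
        rw [BialgData.conv]
        simp only [LinearMap.comp_apply]
        exact key (B.comul x)
      rw [hconv]
      congr 1
    | add v₁ v₂ h1 h2 =>
      rw [TensorProduct.tmul_add, map_add, map_add, h1, h2, map_add, conv_add_right]
  | add u₁ u₂ h1 h2 =>
    rw [TensorProduct.add_tmul, map_add, map_add, h1, h2, map_add, conv_add_left]

end QDAux
/-- Proposition 3.3 of the paper.  The quasi-R-matrix
`R = Σ_i (ε ∞ e_i) ⊗ (e_i* ∞ 1)` is a von Neumann regular element of
`D(H) ⊗ D(H)`, with generalized inverse `R̄ = Σ_i (ε ∞ e_i) ⊗ ((e_i* ∘ T) ∞ 1)`: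
`R R̄ R = R` and `R̄ R R̄ = R̄`. -/
theorem quantumDouble_quasiRMatrix_vonNeumannRegular
    {k : Type} [Field k] {H : Type} [AddCommGroup H] [Module k H]
    [FiniteDimensional k H]
    (B : BialgData k H) (T Tinv : H →ₗ[k] H)
    (hB : B.IsBialgebra) (hT : B.IsWeakAntipode T)
    (hanti : B.IsAntiBialgebraHom T)
    (hinv₁ : Tinv ∘ₗ T = LinearMap.id) (hinv₂ : T ∘ₗ Tinv = LinearMap.id)
    (hbp : B.Biperfect T)
    (ι : Type) [Fintype ι] (b : Module.Basis ι k H)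
    (R Rbar : (Module.Dual k H ⊗[k] H) ⊗[k] (Module.Dual k H ⊗[k] H))
    (hR : R = ∑ i : ι, (B.counit ⊗ₜ b i) ⊗ₜ[k] ((b.coord i) ⊗ₜ B.one))
    (hRbar : Rbar = ∑ i : ι,
      (B.counit ⊗ₜ b i) ⊗ₜ[k] (((b.coord i) ∘ₗ T) ⊗ₜ B.one)) :
    B.doubleMul2 Tinv (B.doubleMul2 Tinv (R ⊗ₜ Rbar) ⊗ₜ R) = R ∧
    B.doubleMul2 Tinv (B.doubleMul2 Tinv (Rbar ⊗ₜ R) ⊗ₜ Rbar) = Rbar := by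
  classical
  set c : H ⊗[k] Module.Dual k H := ∑ i : ι, b i ⊗ₜ[k] b.coord i with hc
  set cT : H ⊗[k] Module.Dual k H := ∑ i : ι, b i ⊗ₜ[k] (b.coord i ∘ₗ T) with hcT
  have hRc : R = QDAux.Psi B c := by
    rw [hR, hc, map_sum]
    exact Finset.sum_congr rfl fun i _ => (QDAux.Psi_tmul B _ _).symm
  have hRcT : Rbar = QDAux.Psi B cT := by
    rw [hRbar, hcT, map_sum]
    exact Finset.sum_congr rfl fun i _ => (QDAux.Psi_tmul B _ _).symm
  have hθc : QDAux.theta c = LinearMap.id := by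
    ext x
    rw [hc, map_sum]
    simp only [LinearMap.coe_sum, Finset.sum_apply, QDAux.theta_tmul,
      Module.Basis.coord_apply, LinearMap.id_coe, id_eq]
    exact b.sum_repr x
  have hθcT : QDAux.theta cT = T := by
    ext x
    rw [hcT, map_sum]
    simp only [LinearMap.coe_sum, Finset.sum_apply, QDAux.theta_tmul,
      LinearMap.comp_apply, Module.Basis.coord_apply]
    exact b.sum_repr (T x)
  have key1 : QDAux.mu B ((QDAux.mu B (c ⊗ₜ cT)) ⊗ₜ c) = c := by
    apply QDAux.theta_inj
    rw [QDAux.theta_mu, QDAux.theta_mu, hθc, hθcT]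
    exact hT.1
  have key2 : QDAux.mu B ((QDAux.mu B (cT ⊗ₜ c)) ⊗ₜ cT) = cT := by
    apply QDAux.theta_inj
    rw [QDAux.theta_mu, QDAux.theta_mu, hθc, hθcT]
    exact hT.2
  constructor
  · rw [hRc, hRcT, QDAux.doubleMul2_Psi B T Tinv hB hanti hinv₁ hinv₂,
      QDAux.doubleMul2_Psi B T Tinv hB hanti hinv₁ hinv₂, key1]
  · rw [hRc, hRcT, QDAux.doubleMul2_Psi B T Tinv hB hanti hinv₁ hinv₂,
      QDAux.doubleMul2_Psi B T Tinv hB hanti hinv₁ hinv₂, key2]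
end
end
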